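/- Let E be a metric space and let τ_K be the locally convex topology on C_b(E) generated by the seminorms p_{K,μ}(f) = sup_{x∈K} |f(x)| + |∫_E f dμ|, over nonempty compact sets K ⊆ E and μ ∈ ca(E). If τ_K coincides with the sup-norm topology on C_b(E), then E is compact; conversely if E is compact the two topologies coincide. -/

import Mathlib

open Filter Topology MeasureTheory

/-- Integration of a function against a finite countably additive signed Borel measure,
via its Jordan decomposition. -/
noncomputable def intSM' {E : Type*} [MeasurableSpace E]
    (s : SignedMeasure E) (f : E → ℝ) : ℝ :=
  (∫ x, f x ∂s.toJordanDecomposition.posPart) -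
    ∫ x, f x ∂s.toJordanDecomposition.negPart

/-- The locally convex topology τ_K on C_b(E), generated by the seminorms
p_{K,μ}(f) = sup_{x∈K}|f(x)| + |∫ f dμ| over nonempty compact K and μ ∈ ca(E):
the initial topology of uniform convergence on each nonempty compact set together with
the integration functionals. -/
noncomputable def tauK (E : Type*) [MetricSpace E] [MeasurableSpace E] [BorelSpace E] :
    TopologicalSpace (BoundedContinuousFunction E ℝ) :=
  (⨅ (K : Set E) (_ : IsCompact K) (_ : K.Nonempty),
      TopologicalSpace.induced
        (fun f : BoundedContinuousFunction E ℝ => UniformFun.ofFun fun x : K => f x)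
        inferInstance) ⊓
    ⨅ s : SignedMeasure E,
      TopologicalSpace.induced (fun f : BoundedContinuousFunction E ℝ => intSM' s ⇑f)
        inferInstance

/-- A bump function at `c` with radius `1/(n+1)`. -/
noncomputable def bump {E : Type*} [MetricSpace E] (c : E) (n : ℕ) :
    BoundedContinuousFunction E ℝ :=
  BoundedContinuousFunction.mkOfBound
    ⟨fun y => max 0 (1 - (n + 1) * dist y c),
      continuous_const.max (continuous_const.sub
        (continuous_const.mul (continuous_id.dist continuous_const)))⟩ 1
    (by
      intro a b
      have h1 : ∀ y : E, max 0 (1 - (n + 1 : ℝ) * dist y c) ∈ Set.Icc (0:ℝ) 1 := by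
        intro y
        constructor
        · exact le_max_left _ _
        · apply max_le zero_le_one
          have : (0:ℝ) ≤ (n + 1) * dist y c := by positivity
          linarith
      obtain ⟨ha0, ha1⟩ := h1 a
      obtain ⟨hb0, hb1⟩ := h1 b
      rw [ContinuousMap.coe_mk, Real.dist_eq, abs_sub_le_iff]
      constructor <;> linarith)

@[simp] lemma bump_apply {E : Type*} [MetricSpace E] (c : E) (n : ℕ) (y : E) :
    bump c n y = max 0 (1 - (n + 1) * dist y c) := rfl

lemma bump_self {E : Type*} [MetricSpace E] (c : E) (n : ℕ) : bump c n c = 1 := by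
  simp

lemma bump_mem_Icc {E : Type*} [MetricSpace E] (c : E) (n : ℕ) (y : E) :
    bump c n y ∈ Set.Icc (0:ℝ) 1 := by
  refine ⟨le_max_left _ _, max_le zero_le_one ?_⟩
  have : (0:ℝ) ≤ (n + 1) * dist y c := by positivity
  linarith

lemma dist_lt_of_bump_ne_zero {E : Type*} [MetricSpace E] {c : E} {n : ℕ} {y : E}
    (h : bump c n y ≠ 0) : dist y c < 1 / (n + 1) := by
  rw [bump_apply] at h
  have hpos : 0 < 1 - (n + 1 : ℝ) * dist y c := by
    by_contra hle
    push_neg at hle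
    exact h (max_eq_left (by linarith))
  rw [lt_div_iff₀ (by positivity), mul_comm]
  linarith

/-- Integration against a finite measure is Lipschitz (hence continuous) on `C_b`. -/
lemma continuous_integral_bcf {E : Type*} [MetricSpace E] [MeasurableSpace E] [BorelSpace E]
    (μ : Measure E) [IsFiniteMeasure μ] :
    Continuous fun f : BoundedContinuousFunction E ℝ => ∫ x, f x ∂μ := by
  refine (LipschitzWith.of_dist_le_mul (K := (μ Set.univ).toNNReal) fun f g => ?_).continuous
  rw [Real.dist_eq, ← integral_sub (f.integrable μ) (g.integrable μ)]
  have h := (f - g).norm_integral_le_mul_norm μ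
  simp only [BoundedContinuousFunction.coe_sub, Pi.sub_apply, Real.norm_eq_abs] at h
  rw [dist_eq_norm]
  exact h

/-- τ_K coincides with the sup-norm topology on C_b(E) iff E is compact. -/
theorem stmt10 {E : Type*} [MetricSpace E] [MeasurableSpace E] [BorelSpace E] :
    tauK E = (inferInstance : TopologicalSpace (BoundedContinuousFunction E ℝ)) ↔
      CompactSpace E := by
  constructor
  · -- If the topologies coincide, E is compact.
    intro h
    rw [compactSpace_iff_seqCompactSpace]
    by_contra hnc
    have hseq : ¬ IsSeqCompact (Set.univ : Set E) := fun hs => hnc ⟨hs⟩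
    rw [IsSeqCompact] at hseq
    push_neg at hseq
    obtain ⟨x, -, hx⟩ := hseq
    -- hx : ∀ a ∈ univ, ∀ φ, StrictMono φ → ¬ Tendsto (x ∘ φ) atTop (𝓝 a)
    set g : ℕ → BoundedContinuousFunction E ℝ := fun n => bump (x n) n with hg
    -- pointwise: eventually g n y = 0
    have hpt : ∀ y : E, ∀ᶠ n in atTop, g n y = 0 := by
      intro y
      by_contra hcon
      rw [Filter.not_eventually] at hcon
      obtain ⟨φ, hφ, hφ'⟩ := Filter.extraction_of_frequently_atTop hcon
      refine hx y (Set.mem_univ y) φ hφ ?_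
      rw [tendsto_iff_dist_tendsto_zero]
      refine squeeze_zero (fun n => dist_nonneg) (fun n => ?_)
        tendsto_one_div_add_atTop_nhds_zero_nat
      have h1 : dist y (x (φ n)) < 1 / (φ n + 1) := dist_lt_of_bump_ne_zero (hφ' n)
      have h2 : (1:ℝ) / (φ n + 1) ≤ 1 / (n + 1) := by
        have hle : (n:ℝ) + 1 ≤ (φ n : ℝ) + 1 := by
          exact_mod_cast Nat.succ_le_succ hφ.le_apply
        exact one_div_le_one_div_of_le (by positivity) hle
      calc dist (x (φ n)) y = dist y (x (φ n)) := dist_comm _ _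
        _ ≤ 1 / (n + 1) := (h1.le.trans h2)
    -- on compacts: eventually g n vanishes on K
    have hK : ∀ K : Set E, IsCompact K → ∀ᶠ n in atTop, ∀ y ∈ K, g n y = 0 := by
      intro K hKc
      by_contra hcon
      rw [Filter.not_eventually] at hcon
      have hcon' : ∃ᶠ n in atTop, ∃ y ∈ K, g n y ≠ 0 := by
        apply hcon.mono
        intro n hn
        push_neg at hn
        exact hn
      obtain ⟨φ, hφ, hφ'⟩ := Filter.extraction_of_frequently_atTop hcon'
      choose y hyK hy using hφ'
      obtain ⟨a, -, ψ, hψ, hya⟩ := hKc.tendsto_subseq hyK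
      refine hx a (Set.mem_univ a) (φ ∘ ψ) (hφ.comp hψ) ?_
      rw [tendsto_iff_dist_tendsto_zero]
      have hya' : Tendsto (fun n => dist (y (ψ n)) a) atTop (𝓝 0) :=
        tendsto_iff_dist_tendsto_zero.mp hya
      have hxy : Tendsto (fun n => dist (x (φ (ψ n))) (y (ψ n))) atTop (𝓝 0) := by
        refine squeeze_zero (fun n => dist_nonneg) (fun n => ?_)
          tendsto_one_div_add_atTop_nhds_zero_nat
        have h1 : dist (y (ψ n)) (x (φ (ψ n))) < 1 / (φ (ψ n) + 1) :=
          dist_lt_of_bump_ne_zero (hy (ψ n))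
        have h2 : (1:ℝ) / (φ (ψ n) + 1) ≤ 1 / (n + 1) := by
          have hle : n ≤ φ (ψ n) := le_trans hψ.le_apply (hφ.le_apply)
          have hle' : (n:ℝ) + 1 ≤ (φ (ψ n) : ℝ) + 1 := by
            exact_mod_cast Nat.succ_le_succ hle
          exact one_div_le_one_div_of_le (by positivity) hle'
        calc dist (x (φ (ψ n))) (y (ψ n)) = dist (y (ψ n)) (x (φ (ψ n))) := dist_comm _ _
          _ ≤ 1 / (n + 1) := h1.le.trans h2
      have := hxy.add hya'
      rw [add_zero] at this
      refine squeeze_zero (fun n => dist_nonneg) (fun n => ?_) this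
      exact dist_triangle _ _ _
    -- g tends to 0 in the tauK topology
    have hT : Tendsto g atTop (@nhds _ (tauK E) 0) := by
      let ι : (K : Set E) → BoundedContinuousFunction E ℝ → UniformFun (↥K) ℝ :=
        fun K f => UniformFun.ofFun fun x : K => f x
      let t1 : TopologicalSpace (BoundedContinuousFunction E ℝ) :=
        ⨅ (K : Set E) (_ : IsCompact K) (_ : K.Nonempty),
          TopologicalSpace.induced (ι K) inferInstance
      let t2 : TopologicalSpace (BoundedContinuousFunction E ℝ) :=
        ⨅ s : SignedMeasure E,
          TopologicalSpace.induced (fun f : BoundedContinuousFunction E ℝ => intSM' s ⇑f) inferInstance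
      have key : @nhds _ (tauK E) 0 = @nhds _ t1 0 ⊓ @nhds _ t2 0 := @nhds_inf (BoundedContinuousFunction E ℝ) t1 t2 0
      have k1 : @nhds _ t1 0 = ⨅ (K : Set E) (_ : IsCompact K) (_ : K.Nonempty),
          Filter.comap (ι K) (𝓝 (ι K 0)) :=
        (@nhds_iInf (BoundedContinuousFunction E ℝ) _ _ 0).trans (iInf_congr fun K =>
          (@nhds_iInf (BoundedContinuousFunction E ℝ) _ _ 0).trans (iInf_congr fun _ =>
            (@nhds_iInf (BoundedContinuousFunction E ℝ) _ _ 0).trans (iInf_congr fun _ =>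
              @nhds_induced _ (BoundedContinuousFunction E ℝ) _ (ι K) 0)))
      have k2 : @nhds _ t2 0 = ⨅ s : SignedMeasure E,
          Filter.comap (fun f : BoundedContinuousFunction E ℝ => intSM' s ⇑f) (𝓝 (intSM' s ⇑(0 : BoundedContinuousFunction E ℝ))) :=
        (@nhds_iInf (BoundedContinuousFunction E ℝ) _ _ 0).trans (iInf_congr fun s =>
          @nhds_induced _ (BoundedContinuousFunction E ℝ) _ (fun f : BoundedContinuousFunction E ℝ => intSM' s ⇑f) 0)
      rw [key, k1, k2, Filter.tendsto_inf]
      constructor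
      · simp only [Filter.tendsto_iInf]
        intro K hKc hKne
        rw [Filter.tendsto_comap_iff]
        have hι0 : ι K 0 = UniformFun.ofFun fun x : K => (0 : BoundedContinuousFunction E ℝ) x := rfl
        rw [hι0, UniformFun.tendsto_iff_tendstoUniformly]
        intro u hu
        filter_upwards [hK K hKc] with n hn z
        have hz : g n z = 0 := hn z z.2
        show ((0 : BoundedContinuousFunction E ℝ) (z : E), g n (z : E)) ∈ u
        have h00 : (0 : BoundedContinuousFunction E ℝ) (z : E) = 0 := rfl
        rw [h00, hz]
        exact refl_mem_uniformity hu
      · simp only [Filter.tendsto_iInf]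
        intro s
        rw [Filter.tendsto_comap_iff]
        have hint : ∀ (μ : Measure E), IsFiniteMeasure μ →
            Tendsto (fun n => ∫ z, g n z ∂μ) atTop (𝓝 0) := by
          intro μ hμ
          have h0 : (0:ℝ) = ∫ z, (0:E → ℝ) z ∂μ := by simp
          rw [h0]
          refine tendsto_integral_of_dominated_convergence (fun _ => (1:ℝ))
            (fun n => ((g n).continuous.measurable).aestronglyMeasurable)
            (integrable_const 1) (fun n => ?_) ?_
          · refine Eventually.of_forall fun z => ?_
            obtain ⟨h0', h1'⟩ := bump_mem_Icc (x n) n z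
            rw [Real.norm_eq_abs, abs_of_nonneg h0']
            exact h1'
          · refine Eventually.of_forall fun z => ?_
            have := hpt z
            simpa using Tendsto.congr' (this.mono fun n hn => hn.symm) tendsto_const_nhds
        have h1 := hint s.toJordanDecomposition.posPart inferInstance
        have h2 := hint s.toJordanDecomposition.negPart inferInstance
        have h3 := h1.sub h2
        rw [sub_zero] at h3
        have h0 : intSM' s ⇑(0 : BoundedContinuousFunction E ℝ) = 0 := by
          simp [intSM']
        rw [h0]
        exact h3
    rw [h] at hT
    have hdist : Tendsto (fun n => dist (g n) 0) atTop (𝓝 0) :=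
      tendsto_iff_dist_tendsto_zero.mp hT
    obtain ⟨n, hn⟩ := (hdist.eventually_lt_const one_pos).exists
    have h1 : (1:ℝ) ≤ ‖g n‖ := by
      have := (g n).norm_coe_le_norm (x n)
      rw [hg] at this ⊢
      simp only [bump_self] at this
      simpa using this
    rw [dist_zero_right] at hn
    linarith
  · -- E compact implies the topologies coincide.
    intro hE
    refine le_antisymm ?_ ?_
    · -- tauK ≤ norm topology
      by_cases hne : Nonempty E
      · calc tauK E ≤ ⨅ (K : Set E) (_ : IsCompact K) (_ : K.Nonempty),
            TopologicalSpace.induced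
              (fun f : BoundedContinuousFunction E ℝ => UniformFun.ofFun fun x : K => f x)
              inferInstance := inf_le_left
          _ ≤ TopologicalSpace.induced
              (fun f : BoundedContinuousFunction E ℝ =>
                UniformFun.ofFun fun x : (Set.univ : Set E) => f x) inferInstance := by
            refine iInf_le_of_le Set.univ (iInf_le_of_le isCompact_univ
              (iInf_le _ Set.univ_nonempty))
          _ ≤ (inferInstance : TopologicalSpace (BoundedContinuousFunction E ℝ)) := by
            apply le_of_nhds_le_nhds
            intro f
            rw [nhds_induced]
            rw [Metric.nhds_basis_ball.ge_iff]
            intro ε hε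
            rw [Filter.mem_comap]
            refine ⟨{u | (UniformFun.ofFun fun x : (Set.univ : Set E) => f x, u) ∈
              UniformFun.gen (Set.univ : Set E) ℝ {p : ℝ × ℝ | dist p.1 p.2 < ε / 2}}, ?_, ?_⟩
            · exact (UniformFun.hasBasis_nhds (Set.univ : Set E) ℝ _).mem_of_mem
                (Metric.dist_mem_uniformity (by linarith))
            · intro u hu
              simp only [Set.mem_preimage, Set.mem_setOf_eq, UniformFun.gen] at hu
              have hle : dist f u ≤ ε / 2 := by
                apply (BoundedContinuousFunction.dist_le (by linarith)).mpr
                intro z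
                exact (hu ⟨z, Set.mem_univ z⟩).le
              rw [Metric.mem_ball]
              calc dist u f = dist f u := dist_comm _ _
                _ ≤ ε / 2 := hle
                _ < ε := by linarith
      · -- E empty: C_b is a subsingleton, so topologies are unique
        have hsub : Subsingleton (BoundedContinuousFunction E ℝ) :=
          ⟨fun f g => by ext z; exact absurd ⟨z⟩ hne⟩
        have key : ∀ (t : TopologicalSpace (BoundedContinuousFunction E ℝ))
            (S : Set (BoundedContinuousFunction E ℝ)), t.IsOpen S := by
          intro t S
          rcases S.eq_empty_or_nonempty with hS | hS
          · rw [hS]; exact @isOpen_empty _ t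
          · have : S = Set.univ := by
              obtain ⟨a, ha⟩ := hS
              apply Set.eq_univ_of_forall
              intro b
              rwa [Subsingleton.elim b a]
            rw [this]; exact @isOpen_univ _ t
        refine le_of_eq (TopologicalSpace.ext_iff.mpr fun S => ?_)
        exact ⟨fun _ => key _ S, fun _ => key _ S⟩
    · -- norm topology ≤ tauK
      refine le_inf ?_ ?_
      · refine le_iInf fun K => le_iInf fun hKc => le_iInf fun hKne => ?_
        rw [← continuous_iff_le_induced]
        rw [continuous_iff_continuousAt]
        intro f
        unfold ContinuousAt
        rw [UniformFun.tendsto_iff_tendstoUniformly]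
        rw [Metric.tendstoUniformly_iff]
        intro ε hε
        filter_upwards [Metric.ball_mem_nhds f hε] with u hu z
        rw [Metric.mem_ball] at hu
        calc dist ((UniformFun.toFun (UniformFun.ofFun fun x : K => f x)) z)
              ((UniformFun.toFun (UniformFun.ofFun fun x : K => u x)) z)
            = dist (f z) (u z) := rfl
          _ ≤ dist f u := BoundedContinuousFunction.dist_coe_le_dist _
          _ = dist u f := dist_comm _ _
          _ < ε := hu
      · refine le_iInf fun s => ?_
        rw [← continuous_iff_le_induced]
        have : (fun f : BoundedContinuousFunction E ℝ => intSM' s ⇑f) =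
            fun f : BoundedContinuousFunction E ℝ =>
              (∫ z, f z ∂s.toJordanDecomposition.posPart) -
                ∫ z, f z ∂s.toJordanDecomposition.negPart := rfl
        rw [this]
        exact (continuous_integral_bcf _).sub (continuous_integral_bcf _)
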